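/- If X is an extremally disconnected Hausdorff space, then |X| ≤ πχ(X)^(wL(X)·t(X)·ψ_c(X)). -/

import Mathlib

open Cardinal Set

universe u

section Defs
variable (X : Type u) [TopologicalSpace X]

/-- An open cover of the whole space. -/
def IsOpenCover (𝒰 : Set (Set X)) : Prop := (∀ U ∈ 𝒰, IsOpen U) ∧ ⋃₀ 𝒰 = Set.univ

/-- The cellularity: supremum of cardinalities of pairwise disjoint families of nonempty
open sets, plus `ℵ₀`. -/
noncomputable def cellularity : Cardinal.{u} :=
  max ℵ₀ (⨆ 𝒰 : {𝒰 : Set (Set X) // (∀ U ∈ 𝒰, IsOpen U ∧ U.Nonempty) ∧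
    𝒰.PairwiseDisjoint id}, #𝒰.1)

/-- The weak Lindelöf degree. -/
noncomputable def wLdeg : Cardinal.{u} :=
  sInf {κ | ℵ₀ ≤ κ ∧ ∀ 𝒰 : Set (Set X), IsOpenCover X 𝒰 →
    ∃ 𝒱 ⊆ 𝒰, #𝒱 ≤ κ ∧ Dense (⋃₀ 𝒱)}

/-- The tightness. -/
noncomputable def tightness : Cardinal.{u} :=
  sInf {κ | ℵ₀ ≤ κ ∧ ∀ (A : Set X) (x : X), x ∈ closure A →
    ∃ B ⊆ A, #B ≤ κ ∧ x ∈ closure B}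

/-- The π-character. -/
noncomputable def piCharacter : Cardinal.{u} :=
  sInf {κ | ℵ₀ ≤ κ ∧ ∀ x : X, ∃ 𝒬 : Set (Set X), #𝒬 ≤ κ ∧
    (∀ P ∈ 𝒬, IsOpen P ∧ P.Nonempty) ∧
    ∀ U : Set X, IsOpen U → x ∈ U → ∃ P ∈ 𝒬, P ⊆ U}

/-- The pseudocharacter. -/
noncomputable def pseudoChar : Cardinal.{u} :=
  sInf {κ | ℵ₀ ≤ κ ∧ ∀ x : X, ∃ 𝒱 : Set (Set X), #𝒱 ≤ κ ∧
    (∀ V ∈ 𝒱, IsOpen V ∧ x ∈ V) ∧ ⋂₀ 𝒱 = {x}}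

/-- The closed pseudocharacter. -/
noncomputable def closedPseudoChar : Cardinal.{u} :=
  sInf {κ | ℵ₀ ≤ κ ∧ ∀ x : X, ∃ 𝒱 : Set (Set X), #𝒱 ≤ κ ∧
    (∀ V ∈ 𝒱, IsOpen V ∧ x ∈ V) ∧ (⋂ V ∈ 𝒱, closure V) = {x}}

/-- The density. -/
noncomputable def densityCard : Cardinal.{u} :=
  sInf {κ | ℵ₀ ≤ κ ∧ ∃ D : Set X, #D ≤ κ ∧ Dense D}

/-- The star of a set `A` with respect to a family `𝒰`. -/
def st (A : Set X) (𝒰 : Set (Set X)) : Set X := ⋃₀ {U | U ∈ 𝒰 ∧ (A ∩ U).Nonempty}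

/-- The θ-closure of a set. -/
def thetaClosure (A : Set X) : Set X :=
  {x | ∀ U : Set X, IsOpen U → x ∈ U → (closure U ∩ A).Nonempty}

/-- The θ-density. -/
noncomputable def thetaDensityCard : Cardinal.{u} :=
  sInf {κ | ℵ₀ ≤ κ ∧ ∃ D : Set X, #D ≤ κ ∧ thetaClosure X D = Set.univ}

/-- A discrete family of sets: each point has a neighborhood meeting at most one member. -/
def IsDiscreteFamily (𝒰 : Set (Set X)) : Prop :=
  ∀ x : X, ∃ V : Set X, IsOpen V ∧ x ∈ V ∧ {U | U ∈ 𝒰 ∧ (V ∩ U).Nonempty}.Subsingleton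

/-- Countable discrete cellularity. -/
def CDC : Prop :=
  ∀ 𝒰 : Set (Set X), (∀ U ∈ 𝒰, IsOpen U ∧ U.Nonempty) → IsDiscreteFamily X 𝒰 → 𝒰.Countable

/-- Star-cdc: every open cover has a cdc subspace whose star covers the space. -/
def StarCDC : Prop :=
  ∀ 𝒰 : Set (Set X), IsOpenCover X 𝒰 → ∃ Y : Set X, CDC ↥Y ∧ st X Y 𝒰 = Set.univ

/-- H-closed space: every open cover has a finite subfamily with dense union. -/
def IsHClosedSpace : Prop :=
  ∀ 𝒰 : Set (Set X), IsOpenCover X 𝒰 → ∃ 𝒱 ⊆ 𝒰, 𝒱.Finite ∧ Dense (⋃₀ 𝒱)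

/-- Countable cellularity (ccc). -/
def CCCSpace : Prop :=
  ∀ 𝒰 : Set (Set X), (∀ U ∈ 𝒰, IsOpen U ∧ U.Nonempty) → 𝒰.PairwiseDisjoint id → 𝒰.Countable

/-- Weakly Lindelöf space. -/
def WeaklyLindelof : Prop :=
  ∀ 𝒰 : Set (Set X), IsOpenCover X 𝒰 → ∃ 𝒱 ⊆ 𝒰, 𝒱.Countable ∧ Dense (⋃₀ 𝒱)

/-- Almost Lindelöf space. -/
def AlmostLindelof : Prop :=
  ∀ 𝒰 : Set (Set X), IsOpenCover X 𝒰 → ∃ 𝒱 ⊆ 𝒰, 𝒱.Countable ∧ (⋃ V ∈ 𝒱, closure V) = Set.univ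

/-- A π-base: a family of nonempty open sets such that every nonempty open set contains one. -/
def IsPiBase (ℬ : Set (Set X)) : Prop :=
  (∀ B ∈ ℬ, IsOpen B ∧ B.Nonempty) ∧
  ∀ U : Set X, IsOpen U → U.Nonempty → ∃ B ∈ ℬ, B ⊆ U

/-- Power homogeneous: some power of `X` is homogeneous. -/
def PowerHomogeneous : Prop :=
  ∃ ι : Type u, ∀ x y : ι → X, ∃ h : (ι → X) ≃ₜ (ι → X), h x = y

/-- A strong `G_δ`-diagonal of rank 2. -/
def HasStrongRank2Diagonal : Prop :=
  ∃ 𝒰 : ℕ → Set (Set X), (∀ n, IsOpenCover X (𝒰 n)) ∧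
    ∀ x : X, (⋂ n, closure (st X (st X {x} (𝒰 n)) (𝒰 n))) = {x}

/-- A `G_δ`-diagonal of rank 2. -/
def HasRank2Diagonal : Prop :=
  ∃ 𝒰 : ℕ → Set (Set X), (∀ n, IsOpenCover X (𝒰 n)) ∧
    ∀ x : X, (⋂ n, st X (st X {x} (𝒰 n)) (𝒰 n)) = {x}

/-- A `G_δ`-diagonal of rank 3. -/
def HasRank3Diagonal : Prop :=
  ∃ 𝒰 : ℕ → Set (Set X), (∀ n, IsOpenCover X (𝒰 n)) ∧
    ∀ x : X, (⋂ n, st X (st X (st X {x} (𝒰 n)) (𝒰 n)) (𝒰 n)) = {x}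

/-- Basically disconnected: the closure of every cozero set is open. -/
def BasicallyDisconnected : Prop :=
  ∀ f : C(X, ℝ), IsOpen (closure {x | f x ≠ 0})

end Defs


namespace Stmt2Aux

open Cardinal Set

variable {X : Type u} [TopologicalSpace X]

/-- Helper: cardinality of an indexed union. -/
lemma card_iUnion_le {ι α : Type u} (f : ι → Set α) {a b : Cardinal.{u}}
    (h1 : #ι ≤ a) (h2 : ∀ i, #(f i) ≤ b) : #(⋃ i, f i) ≤ a * b := by
  rcases isEmpty_or_nonempty ι with hι | hι
  · simp [iUnion_of_empty f]
  · exact (mk_iUnion_le f).trans (mul_le_mul' h1 (ciSup_le' h2))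

lemma wLdeg_spec (X : Type u) [TopologicalSpace X] :
    ℵ₀ ≤ wLdeg X ∧ ∀ 𝒰 : Set (Set X), IsOpenCover X 𝒰 →
      ∃ 𝒱 ⊆ 𝒰, #𝒱 ≤ wLdeg X ∧ Dense (⋃₀ 𝒱) := by
  have h : wLdeg X ∈ {κ | ℵ₀ ≤ κ ∧ ∀ 𝒰 : Set (Set X), IsOpenCover X 𝒰 →
      ∃ 𝒱 ⊆ 𝒰, #𝒱 ≤ κ ∧ Dense (⋃₀ 𝒱)} := by
    apply csInf_mem
    refine ⟨max ℵ₀ #(Set X), le_max_left _ _, fun 𝒰 h𝒰 => ⟨𝒰, Subset.rfl,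
      (mk_set_le 𝒰).trans (le_max_right _ _), ?_⟩⟩
    rw [h𝒰.2]
    exact dense_univ
  exact h

lemma tightness_spec (X : Type u) [TopologicalSpace X] :
    ℵ₀ ≤ tightness X ∧ ∀ (A : Set X) (x : X), x ∈ closure A →
      ∃ B ⊆ A, #B ≤ tightness X ∧ x ∈ closure B := by
  have h : tightness X ∈ {κ | ℵ₀ ≤ κ ∧ ∀ (A : Set X) (x : X), x ∈ closure A →
      ∃ B ⊆ A, #B ≤ κ ∧ x ∈ closure B} := by
    apply csInf_mem
    exact ⟨max ℵ₀ #X, le_max_left _ _, fun A x hx => ⟨A, Subset.rfl,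
      (mk_set_le A).trans (le_max_right _ _), hx⟩⟩
  exact h

lemma piCharacter_spec (X : Type u) [TopologicalSpace X] :
    ℵ₀ ≤ piCharacter X ∧ ∀ x : X, ∃ 𝒬 : Set (Set X), #𝒬 ≤ piCharacter X ∧
      (∀ P ∈ 𝒬, IsOpen P ∧ P.Nonempty) ∧
      ∀ U : Set X, IsOpen U → x ∈ U → ∃ P ∈ 𝒬, P ⊆ U := by
  have h : piCharacter X ∈ {κ | ℵ₀ ≤ κ ∧ ∀ x : X, ∃ 𝒬 : Set (Set X), #𝒬 ≤ κ ∧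
      (∀ P ∈ 𝒬, IsOpen P ∧ P.Nonempty) ∧
      ∀ U : Set X, IsOpen U → x ∈ U → ∃ P ∈ 𝒬, P ⊆ U} := by
    apply csInf_mem
    refine ⟨max ℵ₀ #(Set X), le_max_left _ _, fun x =>
      ⟨{U | IsOpen U ∧ x ∈ U}, (mk_set_le _).trans (le_max_right _ _),
        fun P hP => ⟨hP.1, ⟨x, hP.2⟩⟩, fun U hU hxU => ⟨U, ⟨hU, hxU⟩, Subset.rfl⟩⟩⟩
  exact h

lemma closedPseudoChar_spec (X : Type u) [TopologicalSpace X] [T2Space X] :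
    ℵ₀ ≤ closedPseudoChar X ∧ ∀ x : X, ∃ 𝒱 : Set (Set X), #𝒱 ≤ closedPseudoChar X ∧
      (∀ V ∈ 𝒱, IsOpen V ∧ x ∈ V) ∧ (⋂ V ∈ 𝒱, closure V) = {x} := by
  have h : closedPseudoChar X ∈ {κ | ℵ₀ ≤ κ ∧ ∀ x : X, ∃ 𝒱 : Set (Set X), #𝒱 ≤ κ ∧
      (∀ V ∈ 𝒱, IsOpen V ∧ x ∈ V) ∧ (⋂ V ∈ 𝒱, closure V) = {x}} := by
    apply csInf_mem
    refine ⟨max ℵ₀ #(Set X), le_max_left _ _, fun x =>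
      ⟨{U | IsOpen U ∧ x ∈ U}, (mk_set_le _).trans (le_max_right _ _),
        fun V hV => hV, ?_⟩⟩
    apply Subset.antisymm
    · intro y hy
      simp only [mem_iInter, mem_setOf_eq] at hy
      by_contra hyx
      have hyx' : x ≠ y := fun h => hyx (by simp [h.symm])
      obtain ⟨U, O, hU, hO, hxU, hyO, hdisj⟩ := t2_separation hyx'
      have hyU : y ∈ closure U := hy U ⟨hU, hxU⟩
      have : closure U ⊆ Oᶜ :=
        closure_minimal (fun z hz hzO => hdisj.le_bot ⟨hz, hzO⟩) hO.isClosed_compl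
      exact this hyU hyO
    · intro y hy
      simp only [mem_singleton_iff] at hy
      subst hy
      exact mem_iInter₂.2 fun V hV => subset_closure hV.2
  exact h

/-- Any pairwise disjoint family of nonempty open sets in an extremally disconnected
space has cardinality at most `wLdeg X * tightness X`. -/
lemma cellular_le [ExtremallyDisconnected X] {𝒢 : Set (Set X)}
    (h1 : ∀ U ∈ 𝒢, IsOpen U ∧ U.Nonempty) (h2 : 𝒢.PairwiseDisjoint id) :
    #𝒢 ≤ wLdeg X * tightness X := by
  classical
  obtain ⟨hwinf, hw⟩ := wLdeg_spec X
  obtain ⟨htinf, ht⟩ := tightness_spec X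
  set t := tightness X
  set w := wLdeg X
  -- the open cover
  set 𝒞 : Set (Set X) := {V | ∃ 𝒢' ⊆ 𝒢, #𝒢' ≤ t ∧ V = closure (⋃₀ 𝒢')} ∪
    {(closure (⋃₀ 𝒢))ᶜ} with h𝒞
  have hcov : IsOpenCover X 𝒞 := by
    constructor
    · rintro V (⟨𝒢', hsub', _, rfl⟩ | hV)
      · exact ExtremallyDisconnected.open_closure _ (isOpen_sUnion fun U hU => (h1 U (hsub' hU)).1)
      · rw [mem_singleton_iff] at hV
        rw [hV]
        exact isClosed_closure.isOpen_compl
    · apply eq_univ_of_forall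
      intro x
      by_cases hx : x ∈ closure (⋃₀ 𝒢)
      · obtain ⟨B, hBsub, hBcard, hxB⟩ := ht (⋃₀ 𝒢) x hx
        -- pick for each b in B a member of 𝒢 containing it
        have hpick : ∀ b : B, ∃ G ∈ 𝒢, (b : X) ∈ G := fun b => hBsub b.2
        choose G hG hbG using hpick
        set 𝒢' : Set (Set X) := range G with h𝒢'
        have h𝒢'sub : 𝒢' ⊆ 𝒢 := by rintro _ ⟨b, rfl⟩; exact hG b
        have h𝒢'card : #𝒢' ≤ t := (mk_range_le).trans hBcard
        refine ⟨closure (⋃₀ 𝒢'), Or.inl ⟨𝒢', h𝒢'sub, h𝒢'card, rfl⟩, ?_⟩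
        have : (B : Set X) ⊆ ⋃₀ 𝒢' := by
          intro b hb
          exact ⟨G ⟨b, hb⟩, ⟨⟨b, hb⟩, rfl⟩, hbG ⟨b, hb⟩⟩
        exact closure_mono this hxB
      · exact ⟨(closure (⋃₀ 𝒢))ᶜ, Or.inr rfl, hx⟩
  obtain ⟨𝒱, h𝒱sub, h𝒱card, h𝒱dense⟩ := hw 𝒞 hcov
  -- choose for each member of 𝒱, a witness subfamily if one exists
  set F : Set X → Set (Set X) := fun V =>
    if h : ∃ 𝒢' ⊆ 𝒢, #𝒢' ≤ t ∧ V = closure (⋃₀ 𝒢') then h.choose else ∅ with hF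
  have hFspec : ∀ V, (∃ 𝒢' ⊆ 𝒢, #𝒢' ≤ t ∧ V = closure (⋃₀ 𝒢')) →
      F V ⊆ 𝒢 ∧ #(F V) ≤ t ∧ V = closure (⋃₀ (F V)) := by
    intro V h
    rw [hF]
    simp only [dif_pos h]
    exact ⟨h.choose_spec.1, h.choose_spec.2.1, h.choose_spec.2.2⟩
  have hFcard : ∀ V, #(F V) ≤ t := by
    intro V
    by_cases h : ∃ 𝒢' ⊆ 𝒢, #𝒢' ≤ t ∧ V = closure (⋃₀ 𝒢')
    · exact (hFspec V h).2.1
    · rw [hF]; simp [dif_neg h]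
  set 𝒢s : Set (Set X) := ⋃ V : 𝒱, F V with h𝒢s
  have hcard : #𝒢s ≤ w * t := card_iUnion_le _ h𝒱card fun V => hFcard V
  refine le_trans (mk_le_mk_of_subset ?_) hcard
  -- 𝒢 ⊆ 𝒢s
  intro G hG
  by_contra hGs
  have hGopen := (h1 G hG).1
  have hGne := (h1 G hG).2
  obtain ⟨p, hpG, hp𝒱⟩ := h𝒱dense.inter_open_nonempty G hGopen hGne
  obtain ⟨V, hV𝒱, hpV⟩ := hp𝒱
  rcases h𝒱sub hV𝒱 with hVl | hVr
  · obtain ⟨hFsub, _, hVeq⟩ := hFspec V hVl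
    have hdisj : G ∩ ⋃₀ (F V) = ∅ := by
      apply eq_empty_iff_forall_notMem.2
      rintro z ⟨hzG, W, hWF, hzW⟩
      have hGW : G ≠ W := by rintro rfl; exact hGs ⟨F V, ⟨⟨V, hV𝒱⟩, rfl⟩, hWF⟩
      exact (h2 hG (hFsub hWF) hGW).le_bot ⟨hzG, hzW⟩
    have : p ∈ closure (G ∩ ⋃₀ (F V)) := hGopen.inter_closure ⟨hpG, hVeq ▸ hpV⟩
    rw [hdisj] at this
    simpa using this
  · rw [mem_singleton_iff] at hVr
    rw [hVr] at hpV
    exact hpV (subset_closure ⟨G, hG, hpG⟩)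

lemma le_mul_right' {a b : Cardinal.{u}} (hb : 1 ≤ b) : a ≤ a * b := by
  calc a = a * 1 := (mul_one a).symm
  _ ≤ a * b := mul_le_mul' le_rfl hb

lemma le_mul_left' {a b : Cardinal.{u}} (ha : 1 ≤ a) : b ≤ a * b := by
  calc b = 1 * b := (one_mul b).symm
  _ ≤ a * b := mul_le_mul' ha le_rfl

lemma exists_gt_aux {c : Cardinal.{u}} (hreg : c.IsRegular) {ιT : Type u}
    (f : ιT → c.ord.ToType) (hc : #ιT < c) :
    ∃ i, ∀ t, f t < i := by
  have hΛ : Order.IsSuccLimit (c.ord) := Cardinal.isSuccLimit_ord hreg.aleph0_le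
  set e := (Ordinal.ToType.mk : Set.Iio c.ord ≃o c.ord.ToType) with he
  set o : ιT → Ordinal.{u} := fun t => Order.succ ((e.symm (f t) : Ordinal.{u})) with ho'
  have ho : ∀ t, o t < c.ord := fun t => hΛ.succ_lt (e.symm (f t)).2
  have hcof : #ιT < (c.ord).cof := by rw [hreg.cof_eq]; exact hc
  have hsup : iSup o < c.ord := Ordinal.iSup_lt_ord hcof ho
  refine ⟨e ⟨iSup o, hsup⟩, fun t => ?_⟩
  have h1 : (e.symm (f t) : Ordinal.{u}) < iSup o :=
    lt_of_lt_of_le (Order.lt_succ _) (Ordinal.le_iSup o t)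
  have h2 : e.symm (f t) < e.symm (e ⟨iSup o, hsup⟩) := by
    rw [e.symm_apply_apply]
    exact Subtype.mk_lt_mk.2 h1
  rwa [e.symm.lt_iff_lt] at h2

/-- Transfinite iteration of a `step` operator along `c.ord.toType`. -/
noncomputable def stmtChain {X : Type u} (c : Cardinal.{u}) (step : Set X → Set X) :
    c.ord.ToType → Set X :=
  WellFounded.fix wellFounded_lt (fun i ih => step (⋃ j : Set.Iio i, ih j j.2))

lemma stmtChain_eq {X : Type u} (c : Cardinal.{u}) (step : Set X → Set X) (i : c.ord.ToType) :
    stmtChain c step i = step (⋃ j : Set.Iio i, stmtChain c step j) := by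
  rw [stmtChain, WellFounded.fix_eq]


end Stmt2Aux

theorem stmt2 (X : Type u) [TopologicalSpace X] [T2Space X] [ExtremallyDisconnected X] :
    #X ≤ piCharacter X ^ (wLdeg X * tightness X * closedPseudoChar X) := by
  classical
  rcases isEmpty_or_nonempty X with hX | hX
  · exact (Cardinal.mk_eq_zero X) ▸ zero_le
  obtain ⟨hwinf, hw⟩ := Stmt2Aux.wLdeg_spec X
  obtain ⟨htinf, ht⟩ := Stmt2Aux.tightness_spec X
  obtain ⟨hpinf, hp⟩ := Stmt2Aux.piCharacter_spec X
  obtain ⟨hcinf, hcl⟩ := Stmt2Aux.closedPseudoChar_spec X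
  choose B hB1 hB2 hB3 using hp
  choose V hV1 hV2 hV3 using hcl
  set lam := piCharacter X with hlam
  set κ := wLdeg X * tightness X * closedPseudoChar X with hκdef
  have h1w : (1 : Cardinal) ≤ wLdeg X := one_le_aleph0.trans hwinf
  have h1t : (1 : Cardinal) ≤ tightness X := one_le_aleph0.trans htinf
  have h1c : (1 : Cardinal) ≤ closedPseudoChar X := one_le_aleph0.trans hcinf
  have hwt_le : wLdeg X * tightness X ≤ κ := Stmt2Aux.le_mul_right' h1c
  have hψ_le : closedPseudoChar X ≤ κ :=
    Stmt2Aux.le_mul_left' (le_trans h1w (Stmt2Aux.le_mul_right' h1t))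
  have hκ : ℵ₀ ≤ κ := hwinf.trans ((Stmt2Aux.le_mul_right' h1t).trans hwt_le)
  have hlaminf : ℵ₀ ≤ lam := hpinf
  have hlamne : lam ≠ 0 := fun h => by simp [h] at hlaminf; exact (aleph0_ne_zero hlaminf)
  have h2lam : (2 : Cardinal) ≤ lam := le_trans (by exact_mod_cast (nat_lt_aleph0 2).le) hlaminf
  set μ := lam ^ κ with hμdef
  have hμκ : μ ^ κ = μ := by rw [hμdef, ← power_mul, mul_eq_self hκ]
  have hlamμ : lam ≤ μ := by
    conv_lhs => rw [← power_one lam]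
    exact power_le_power_left hlamne (one_le_aleph0.trans hκ)
  have hμinf : ℵ₀ ≤ μ := hlaminf.trans hlamμ
  have hμμ : μ * μ = μ := mul_eq_self hμinf
  have hsuccμ : Order.succ κ ≤ μ :=
    Order.succ_le_of_lt ((Cardinal.cantor κ).trans_le (power_le_power_right h2lam))
  -- the closing-off machinery
  set P : Set X → Set (Set X) := fun S => ⋃ x : S, B x with hPdef
  set Fam : Set X → Set (Set (Set (Set X))) :=
    fun S => {F | #F ≤ κ ∧ ∀ 𝒢 ∈ F, 𝒢 ⊆ P S ∧ #𝒢 ≤ κ} with hFamdef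
  set pickpt : Set (Set (Set X)) → X := fun F =>
    if h : ((⋃ 𝒢 ∈ F, closure (⋃₀ 𝒢))ᶜ : Set X).Nonempty then h.choose
    else Classical.arbitrary X with hpickdef
  set step : Set X → Set X := fun S => S ∪ (pickpt '' (Fam S)) with hstepdef
  set c : Cardinal.{u} := Order.succ κ with hcdef
  set g : c.ord.ToType → Set X := Stmt2Aux.stmtChain c step with hgdef
  have hg : ∀ i, g i = step (⋃ j : Set.Iio i, g j) := fun i => Stmt2Aux.stmtChain_eq c step i
  -- cardinality of the P- and Fam-sets
  have hPμ : ∀ S : Set X, #S ≤ μ → #(P S) ≤ μ := by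
    intro S hS
    refine le_trans (Stmt2Aux.card_iUnion_le _ hS fun x => hB1 x) ?_
    calc μ * lam ≤ μ * μ := mul_le_mul' le_rfl hlamμ
    _ = μ := hμμ
  have hsubμ : ∀ S : Set X, #S ≤ μ → #({𝒢 : Set (Set X) | 𝒢 ⊆ P S ∧ #𝒢 ≤ κ}) ≤ μ := by
    intro S hS
    refine le_trans (mk_bounded_subset_le (P S) κ) ?_
    rw [← hμκ]
    exact power_le_power_right (max_le (hPμ S hS) hμinf)
  have hFamμ : ∀ S : Set X, #S ≤ μ → #(Fam S) ≤ μ := by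
    intro S hS
    have h2 : Fam S ⊆ {F : Set (Set (Set X)) |
        F ⊆ {𝒢 : Set (Set X) | 𝒢 ⊆ P S ∧ #𝒢 ≤ κ} ∧ #F ≤ κ} :=
      fun F hF => ⟨fun 𝒢 h𝒢 => hF.2 𝒢 h𝒢, hF.1⟩
    refine le_trans (mk_le_mk_of_subset h2) ?_
    refine le_trans (mk_bounded_subset_le _ κ) ?_
    rw [← hμκ]
    exact power_le_power_right (max_le (hsubμ S hS) hμinf)
  -- stage cardinalities
  have hstage : ∀ i, #(g i) ≤ μ := by
    intro i
    refine wellFounded_lt.induction (C := fun i => #(g i) ≤ μ) i ?_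
    intro i ih
    rw [hg i]
    have hU : #(⋃ j : Set.Iio i, g j) ≤ μ := by
      exact le_trans (Stmt2Aux.card_iUnion_le _
        ((Cardinal.mk_Iio_ord_toType i).le.trans hsuccμ)
        (fun j : ↥(Set.Iio i) => ih j.1 j.2)) hμμ.le
    refine le_trans (mk_union_le _ _) ?_
    have hpk : #(pickpt '' (Fam (⋃ j : Set.Iio i, g j))) ≤ μ :=
      mk_image_le.trans (hFamμ _ hU)
    calc #(⋃ j : Set.Iio i, g j) + #(pickpt '' (Fam (⋃ j : Set.Iio i, g j))) ≤ μ + μ :=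
          add_le_add hU hpk
    _ = μ := by rw [add_eq_self hμinf]
  set H : Set X := ⋃ i, g i with hHdef
  have hHμ : #H ≤ μ := by
    have h := Stmt2Aux.card_iUnion_le (a := μ) (b := μ) g
      (by rw [mk_ord_toType]; exact hsuccμ) hstage
    rwa [hμμ] at h
  suffices hHuniv : H = Set.univ by
    calc #X = #(Set.univ : Set X) := mk_univ.symm
    _ ≤ μ := hHuniv ▸ hHμ
  by_contra hne
  obtain ⟨q, hq⟩ := (ne_univ_iff_exists_notMem H).1 hne
  -- for each W in the pseudobase of q, build a maximal disjoint family
  have key : ∀ W ∈ V q, ∃ 𝒢' : Set (Set X), (∀ Bb ∈ 𝒢', ∃ x ∈ H, Bb ∈ B x) ∧ #𝒢' ≤ κ ∧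
      {x | x ∈ H ∧ x ∉ closure W} ⊆ closure (⋃₀ 𝒢') ∧ q ∉ closure (⋃₀ 𝒢') := by
    intro W hW
    set Cand : Set (Set X) :=
      {Bb | ∃ x, (x ∈ H ∧ x ∉ closure W) ∧ Bb ∈ B x ∧ Bb ⊆ (closure W)ᶜ} with hCand
    have hchcond : ∀ ch ⊆ {𝒢 : Set (Set X) | 𝒢 ⊆ Cand ∧ 𝒢.PairwiseDisjoint id},
        IsChain (· ⊆ ·) ch → ∃ ub ∈ {𝒢 : Set (Set X) | 𝒢 ⊆ Cand ∧ 𝒢.PairwiseDisjoint id},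
          ∀ s ∈ ch, s ⊆ ub := by
      intro ch hchS hchain
      refine ⟨⋃₀ ch, ⟨?_, ?_⟩, fun s hs => subset_sUnion_of_mem hs⟩
      · rintro Bb ⟨s, hs, hBb⟩
        exact (hchS hs).1 hBb
      · rintro a ⟨s, hs, ha⟩ b ⟨s', hs', hb⟩ hab
        rcases hchain.total hs hs' with hss | hss
        · exact (hchS hs').2 (hss ha) hb hab
        · exact (hchS hs).2 ha (hss hb) hab
    obtain ⟨m, hm⟩ :=
      zorn_subset {𝒢 : Set (Set X) | 𝒢 ⊆ Cand ∧ 𝒢.PairwiseDisjoint id} hchcond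
    have hmC : m ⊆ Cand := hm.1.1
    have hmPD : m.PairwiseDisjoint id := hm.1.2
    have hmopen : ∀ U ∈ m, IsOpen U ∧ U.Nonempty := by
      intro U hU
      obtain ⟨x, _, hUB, _⟩ := hmC hU
      exact hB2 x U hUB
    have hcell : #m ≤ κ := (Stmt2Aux.cellular_le hmopen hmPD).trans hwt_le
    refine ⟨m, ?_, hcell, ?_, ?_⟩
    · intro Bb hBb
      obtain ⟨x, hx, hBB, _⟩ := hmC hBb
      exact ⟨x, hx.1, hBB⟩
    · -- coverage
      rintro x ⟨hxH, hxW⟩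
      by_contra hxcl
      have hOopen : IsOpen ((closure W)ᶜ ∩ (closure (⋃₀ m))ᶜ) :=
        (isClosed_closure.isOpen_compl).inter (isClosed_closure.isOpen_compl)
      have hxO : x ∈ (closure W)ᶜ ∩ (closure (⋃₀ m))ᶜ := ⟨hxW, hxcl⟩
      obtain ⟨Bb, hBbB, hBbO⟩ := hB3 x _ hOopen hxO
      have hBbCand : Bb ∈ Cand :=
        ⟨x, ⟨hxH, hxW⟩, hBbB, hBbO.trans inter_subset_left⟩
      have hBbm : Bb ∉ m := by
        intro hmem
        obtain ⟨z, hz⟩ := (hB2 x Bb hBbB).2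
        exact (hBbO hz).2 (subset_closure ⟨Bb, hmem, hz⟩)
      have hins : insert Bb m ∈ {𝒢 : Set (Set X) | 𝒢 ⊆ Cand ∧ 𝒢.PairwiseDisjoint id} := by
        constructor
        · rw [insert_subset_iff]
          exact ⟨hBbCand, hmC⟩
        · refine hmPD.insert ?_
          intro b hb _
          rw [Set.disjoint_left]
          intro z hzB hzb
          exact (hBbO hzB).2 (subset_closure ⟨b, hb, hzb⟩)
      exact hBbm (hm.2 hins (subset_insert _ _) (mem_insert _ _))
    · -- q avoidance
      intro hqcl
      have hWopen := (hV2 q W hW).1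
      have hqW := (hV2 q W hW).2
      have hdisj : W ∩ ⋃₀ m = ∅ := by
        apply eq_empty_iff_forall_notMem.2
        rintro z ⟨hzW, Bb, hBb, hzB⟩
        obtain ⟨x, _, _, hBbc⟩ := hmC hBb
        exact hBbc hzB (subset_closure hzW)
      have : q ∈ closure (W ∩ ⋃₀ m) := hWopen.inter_closure ⟨hqW, hqcl⟩
      rw [hdisj] at this
      simp at this
  choose G' hG'own hG'card hG'cov hG'q using key
  set F : Set (Set (Set X)) := range (fun W : ↥(V q) => G' W.1 W.2) with hFdef
  have hFcard : #F ≤ κ := mk_range_le.trans ((hV1 q).trans hψ_le)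
  have hFrep : ∀ 𝒢 ∈ F, ∃ W : ↥(V q), 𝒢 = G' W.1 W.2 := by
    rintro 𝒢 ⟨W, rfl⟩
    exact ⟨W, rfl⟩
  -- owners of the members of the families
  have hToP : ∀ Bb : ↥(⋃₀ F), ∃ p : X × c.ord.ToType,
      p.1 ∈ g p.2 ∧ (Bb : Set X) ∈ B p.1 := by
    rintro ⟨Bb, 𝒢, h𝒢F, hBb𝒢⟩
    obtain ⟨W, rfl⟩ := hFrep 𝒢 h𝒢F
    obtain ⟨x, hxH, hxB⟩ := hG'own W.1 W.2 Bb hBb𝒢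
    obtain ⟨i, hi⟩ := mem_iUnion.1 hxH
    exact ⟨⟨x, i⟩, hi, hxB⟩
  choose own hown1 hown2 using hToP
  have hTcard : #(⋃₀ F) ≤ κ := by
    rw [sUnion_eq_iUnion]
    refine le_trans (Stmt2Aux.card_iUnion_le _ hFcard ?_) (by rw [mul_eq_self hκ])
    rintro ⟨𝒢, h𝒢F⟩
    obtain ⟨W, rfl⟩ := hFrep 𝒢 h𝒢F
    exact hG'card W.1 W.2
  obtain ⟨i0, hi0⟩ := Stmt2Aux.exists_gt_aux (isRegular_succ hκ)
    (fun Bb => (own Bb).2) (hTcard.trans_lt (Order.lt_succ κ))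
  have hFU : F ∈ Fam (⋃ j : Set.Iio i0, g j) := by
    refine ⟨hFcard, fun 𝒢 h𝒢 => ⟨?_, ?_⟩⟩
    · intro Bb hBb
      have hBbT : Bb ∈ ⋃₀ F := ⟨𝒢, h𝒢, hBb⟩
      have h1 := hown1 ⟨Bb, hBbT⟩
      have h2 := hown2 ⟨Bb, hBbT⟩
      have hlt := hi0 ⟨Bb, hBbT⟩
      have hinU : (own ⟨Bb, hBbT⟩).1 ∈ ⋃ j : Set.Iio i0, g j :=
        mem_iUnion.2 ⟨⟨(own ⟨Bb, hBbT⟩).2, hlt⟩, h1⟩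
      exact mem_iUnion.2 ⟨⟨(own ⟨Bb, hBbT⟩).1, hinU⟩, h2⟩
    · obtain ⟨W, rfl⟩ := hFrep 𝒢 h𝒢
      exact hG'card W.1 W.2
  have hbadne : ((⋃ 𝒢 ∈ F, closure (⋃₀ 𝒢))ᶜ : Set X).Nonempty := by
    refine ⟨q, fun hmem => ?_⟩
    obtain ⟨𝒢, h𝒢F, hqcl⟩ := mem_iUnion₂.1 hmem
    obtain ⟨W, rfl⟩ := hFrep 𝒢 h𝒢F
    exact hG'q W.1 W.2 hqcl
  have hy1 : pickpt F ∈ ((⋃ 𝒢 ∈ F, closure (⋃₀ 𝒢))ᶜ : Set X) := by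
    rw [hpickdef]
    simp only [dif_pos hbadne]
    exact hbadne.choose_spec
  have hy2 : pickpt F ∈ g i0 := by
    rw [hg i0]
    exact Or.inr ⟨F, hFU, rfl⟩
  have hyH : pickpt F ∈ H := mem_iUnion.2 ⟨i0, hy2⟩
  have hyq : pickpt F ≠ q := fun h => hq (h ▸ hyH)
  have hWex : ∃ W ∈ V q, pickpt F ∉ closure W := by
    by_contra hcon
    push_neg at hcon
    have : pickpt F ∈ (⋂ W ∈ V q, closure W) := mem_iInter₂.2 hcon
    rw [hV3 q] at this
    exact hyq this
  obtain ⟨W, hW, hyW⟩ := hWex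
  have hycov : pickpt F ∈ closure (⋃₀ (G' W hW)) := hG'cov W hW ⟨hyH, hyW⟩
  have hynotin : pickpt F ∉ closure (⋃₀ (G' W hW)) := by
    intro hclmem
    have hmem : pickpt F ∈ ⋃ 𝒢 ∈ F, closure (⋃₀ 𝒢) :=
      mem_iUnion₂.2 ⟨G' W hW, ⟨⟨W, hW⟩, rfl⟩, hclmem⟩
    exact hy1 hmem
  exact hynotin hycov
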